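/- Let A ∈ S_{d,K} and C ∈ R^{d×d} symmetric with AᵀC²A invertible. If (I_d − AAᵀ)CA = 0, then CA(AᵀC²A)^{−1/2} = A, i.e., A is a fixed point of the update A ↦ CA(AᵀC²A)^{−1/2}. -/

import Mathlib

open Matrix

open scoped ComplexOrder in
/-- The positive semidefinite square root of a positive semidefinite matrix, as defined in the
older Mathlib (`Matrix.PosSemidef.sqrt`, since removed). -/
noncomputable def Matrix.PosSemidef.sqrt {n 𝕜 : Type*} [Fintype n] [RCLike 𝕜] [DecidableEq n]
    {A : Matrix n n 𝕜} (hA : A.PosSemidef) : Matrix n n 𝕜 :=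
  hA.isHermitian.eigenvectorUnitary.1 * diagonal ((↑) ∘ (√·) ∘ hA.isHermitian.eigenvalues) *
  (star hA.isHermitian.eigenvectorUnitary : Matrix n n 𝕜)

theorem stmt9 {d K : ℕ} (A : Matrix (Fin d) (Fin K) ℝ) (C : Matrix (Fin d) (Fin d) ℝ)
    (hA : Aᵀ * A = 1) (hC : Cᵀ = C)
    (hP : (Aᵀ * C * C * A).PosDef) (hS : (Aᵀ * C * A).PosDef)
    (h : (1 - A * Aᵀ) * C * A = 0) :
    C * A * (hP.posSemidef.sqrt)⁻¹ = A := by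
  have hCA : C * A = A * (Aᵀ * C * A) := by
    have h' : (C - A * (Aᵀ * C)) * A = 0 := by
      simpa [sub_mul, Matrix.mul_assoc] using h
    have := sub_eq_zero.mp (by rw [Matrix.sub_mul] at h'; simpa [Matrix.mul_assoc] using h')
    simpa [Matrix.mul_assoc] using this
  have hCA' : C * A = A * (Aᵀ * C * A) := hCA
  have hsq : (Aᵀ * C * A) ^ 2 = Aᵀ * C * C * A := by
    calc (Aᵀ * C * A) ^ 2 = Aᵀ * C * (A * (Aᵀ * C * A)) := by
          rw [pow_two]; simp [Matrix.mul_assoc]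
      _ = Aᵀ * C * (C * A) := by rw [← hCA]
      _ = Aᵀ * C * C * A := by simp [Matrix.mul_assoc]
  have hsqrt : hP.posSemidef.sqrt = Aᵀ * C * A :=
    (by
      have hB := hS.posSemidef
      have hBsa : IsSelfAdjoint (Aᵀ * C * A) := hB.isHermitian
      have e1 : hP.posSemidef.sqrt = cfc Real.sqrt (Aᵀ * C * C * A) := by
        rw [hP.posSemidef.isHermitian.cfc_eq, IsHermitian.cfc, Unitary.conjStarAlgAut_apply]
        rfl
      rw [e1, ← hsq, ← cfc_pow_id (R := ℝ) (Aᵀ * C * A) 2 hBsa,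
        ← cfc_comp' Real.sqrt (fun x : ℝ => x ^ 2) (Aᵀ * C * A) (by fun_prop) (by fun_prop) hBsa]
      conv_rhs => rw [← cfc_id' ℝ (Aᵀ * C * A) hBsa]
      apply cfc_congr
      intro x hx
      rw [hB.isHermitian.spectrum_real_eq_range_eigenvalues] at hx
      obtain ⟨i, rfl⟩ := hx
      exact Real.sqrt_sq (hB.eigenvalues_nonneg i))
  rw [hsqrt, hCA, Matrix.mul_assoc,
    Matrix.mul_nonsing_inv _ (isUnit_iff_ne_zero.mpr hS.det_pos.ne'),
    Matrix.mul_one]
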